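/- Let B ⊆ ℝ^(n+1) be compact strictly convex with non-empty interior, and let v₁,…,v_{n+1} be an orthonormal basis such that B is regular with respect to it, has no special corners with respect to it, and the medians M_i := M_{v_i} are defined for each i. If x ∈ ⋂_{i=1}^{n+1} M_i lies in the interior of B, then there exist 2(n+1) points x_i^± ∈ ∂B with x = (x_i^+ + x_i^-)/2 and p_i(x_i^+) = p_i(x_i^-) for each i; these points are the vertices of an (n+1)-rhomb with direction {v₁,…,v_{n+1}} inscribed in ∂B. -/

import Mathlib

open Metric Set
open scoped RealInnerProductSpace

/-- Orthogonal projection of `ℝ^{n+1}` onto the hyperplane orthogonal to `v`. -/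
noncomputable def pv {n : ℕ} (v : EuclideanSpace ℝ (Fin (n + 1))) :
    EuclideanSpace ℝ (Fin (n + 1)) →L[ℝ] ↥((ℝ ∙ v)ᗮ) :=
  Submodule.orthogonalProjectionOnto (ℝ ∙ v)ᗮ

/-- `B` is strictly convex: every open segment between two distinct points of `B`
lies in the interior of `B`. -/
def StrictlyConvexSet {V : Type*} [AddCommGroup V] [Module ℝ V] [TopologicalSpace V]
    (B : Set V) : Prop :=
  ∀ x ∈ B, ∀ y ∈ B, x ≠ y → openSegment ℝ x y ⊆ interior B

/-- Points of `B` projecting to the boundary of `p_v(B)`. -/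
def D0 {n : ℕ} (B : Set (EuclideanSpace ℝ (Fin (n + 1)))) (v : EuclideanSpace ℝ (Fin (n + 1))) :
    Set (EuclideanSpace ℝ (Fin (n + 1))) :=
  {x ∈ B | pv v x ∈ frontier (pv v '' B)}

/-- Upper region of `S = ∂B`: points over the interior of `p_v(B)` maximizing `x·v` on the fiber. -/
def Uplus {n : ℕ} (B : Set (EuclideanSpace ℝ (Fin (n + 1)))) (v : EuclideanSpace ℝ (Fin (n + 1))) :
    Set (EuclideanSpace ℝ (Fin (n + 1))) :=
  {x | x ∈ frontier B ∧ pv v x ∈ interior (pv v '' B) ∧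
    ∀ y ∈ B, pv v y = pv v x → ⟪y, v⟫ ≤ ⟪x, v⟫}

/-- Lower region of `S = ∂B`: points over the interior of `p_v(B)` minimizing `x·v` on the fiber. -/
def Uminus {n : ℕ} (B : Set (EuclideanSpace ℝ (Fin (n + 1)))) (v : EuclideanSpace ℝ (Fin (n + 1))) :
    Set (EuclideanSpace ℝ (Fin (n + 1))) :=
  {x | x ∈ frontier B ∧ pv v x ∈ interior (pv v '' B) ∧
    ∀ y ∈ B, pv v y = pv v x → ⟪x, v⟫ ≤ ⟪y, v⟫}

def Dplus {n : ℕ} (B : Set (EuclideanSpace ℝ (Fin (n + 1)))) (v : EuclideanSpace ℝ (Fin (n + 1))) :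
    Set (EuclideanSpace ℝ (Fin (n + 1))) := D0 B v ∪ Uplus B v

def Dminus {n : ℕ} (B : Set (EuclideanSpace ℝ (Fin (n + 1)))) (v : EuclideanSpace ℝ (Fin (n + 1))) :
    Set (EuclideanSpace ℝ (Fin (n + 1))) := D0 B v ∪ Uminus B v

/-- The median of `S` in direction `v`: midpoints of fiber pairs. -/
def median {n : ℕ} (B : Set (EuclideanSpace ℝ (Fin (n + 1)))) (v : EuclideanSpace ℝ (Fin (n + 1))) :
    Set (EuclideanSpace ℝ (Fin (n + 1))) :=
  {z | ∃ xp ∈ Dplus B v, ∃ xm ∈ Dminus B v, pv v xp = pv v xm ∧ z = midpoint ℝ xp xm}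


lemma pv_surj {n : ℕ} (v : EuclideanSpace ℝ (Fin (n + 1))) :
    Function.Surjective (pv v) := fun w =>
  ⟨(w : EuclideanSpace ℝ (Fin (n + 1))), Submodule.orthogonalProjectionOnto_mem_subspace_eq_self w⟩

lemma D0_subset_frontier {n : ℕ} (B : Set (EuclideanSpace ℝ (Fin (n + 1))))
    (v : EuclideanSpace ℝ (Fin (n + 1))) : D0 B v ⊆ frontier B := by
  rintro y ⟨hyB, hyf⟩
  refine ⟨subset_closure hyB, fun hyint => ?_⟩
  have hopen : IsOpenMap (pv v) := (pv v).isOpenMap (pv_surj v)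
  have h1 : pv v y ∈ interior (pv v '' B) :=
    interior_maximal (Set.image_mono interior_subset)
      (hopen _ isOpen_interior) ⟨y, hyint, rfl⟩
  exact hyf.2 h1

/-- If `B` is regular and has no special corners with respect to an orthonormal basis
`v₁, …, v_{n+1}`, and `x` lies in all the medians `M_i` and in the interior of `B`, then
there are points `x_i^± ∈ ∂B` with `x` their midpoint, `p_i(x_i^+) = p_i(x_i^-)`, and
`x_i^± = x ± λ_i • v_i` with `λ_i > 0`: the vertices of an inscribed `(n+1)`-rhomb with
direction `{v₁, …, v_{n+1}}`. -/
theorem stmt18 (n : ℕ) (B : Set (EuclideanSpace ℝ (Fin (n + 1))))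
    (hBc : IsCompact B) (hBsc : StrictlyConvexSet B) (hBint : (interior B).Nonempty)
    (v : Fin (n + 1) → EuclideanSpace ℝ (Fin (n + 1))) (hv : Orthonormal ℝ v)
    (hreg : ∀ I : Finset (Fin (n + 1)), ∀ x ∈ B,
      (∀ i ∈ I, pv (v i) x ∈ frontier (pv (v i) '' B)) →
        Submodule.orthogonalProjectionOnto (Submodule.span ℝ (v '' ↑I))ᗮ x ∈
          frontier ((Submodule.orthogonalProjectionOnto (Submodule.span ℝ (v '' ↑I))ᗮ :
            EuclideanSpace ℝ (Fin (n + 1)) → _) '' B))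
    (hnsc : ¬ ∃ x ∈ B, ∀ i : Fin (n + 1), pv (v i) x ∈ frontier (pv (v i) '' B))
    (x : EuclideanSpace ℝ (Fin (n + 1)))
    (hx : x ∈ ⋂ i : Fin (n + 1), median B (v i)) (hxint : x ∈ interior B) :
    ∃ xp xm : Fin (n + 1) → EuclideanSpace ℝ (Fin (n + 1)), ∃ lam : Fin (n + 1) → ℝ,
      ∀ i : Fin (n + 1),
        xp i ∈ frontier B ∧ xm i ∈ frontier B ∧
        x = midpoint ℝ (xp i) (xm i) ∧ pv (v i) (xp i) = pv (v i) (xm i) ∧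
        0 < lam i ∧ xp i = x + lam i • v i ∧ xm i = x - lam i • v i := by
  have hclosed : IsClosed B := hBc.isClosed
  simp only [Set.mem_iInter] at hx
  have key : ∀ i : Fin (n + 1), ∃ p q : EuclideanSpace ℝ (Fin (n + 1)), ∃ l : ℝ,
      p ∈ frontier B ∧ q ∈ frontier B ∧
      x = midpoint ℝ p q ∧ pv (v i) p = pv (v i) q ∧
      0 < l ∧ p = x + l • v i ∧ q = x - l • v i := by
    intro i
    obtain ⟨a, ha, b, hb, hab, hmid⟩ := hx i
    have haF : a ∈ frontier B := by
      rcases ha with h | h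
      · exact D0_subset_frontier B (v i) h
      · exact h.1
    have hbF : b ∈ frontier B := by
      rcases hb with h | h
      · exact D0_subset_frontier B (v i) h
      · exact h.1
    have hxne : x ∉ frontier B := fun h => h.2 hxint
    have hne : a ≠ b := by
      rintro rfl
      rw [midpoint_self] at hmid
      exact hxne (hmid ▸ haF)
    have hker : a - b ∈ ℝ ∙ v i := by
      have h0 : pv (v i) (a - b) = 0 := by
        rw [map_sub, hab, sub_self]
      have := Submodule.orthogonalProjectionOnto_eq_zero_iff.mp h0
      rwa [Submodule.orthogonal_orthogonal] at this
    obtain ⟨c, hc⟩ := Submodule.mem_span_singleton.mp hker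
    have hvne : v i ≠ 0 := hv.ne_zero i
    have hcne : c ≠ 0 := by
      rintro rfl
      rw [zero_smul] at hc
      exact hne (sub_eq_zero.mp hc.symm)
    have hcv : a - b = c • v i := hc.symm
    have hpa : a = x + (c / 2) • v i := by
      have hsum : x + x = a + b := by rw [hmid, midpoint_add_self]
      have h2 : (2 : ℝ) • a = (2 : ℝ) • (x + (c / 2) • v i) := by
        have e1 : (2 : ℝ) • (x + (c / 2) • v i) = (x + x) + ((2 * (c / 2)) • v i) := by
          rw [smul_add, smul_smul, two_smul]
        have e2 : (2 : ℝ) * (c / 2) = c := by ring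
        rw [e1, hsum, e2, ← hcv, two_smul]
        abel
      exact smul_right_injective _ (two_ne_zero) h2
    have hpb : b = x - (c / 2) • v i := by
      have : b = a - c • v i := by rw [← hcv]; abel
      rw [this, hpa]
      module
    rcases lt_or_gt_of_ne hcne with hneg | hpos
    · refine ⟨b, a, -(c / 2), hbF, haF, ?_, hab.symm, by linarith, ?_, ?_⟩
      · rw [hmid, midpoint_comm]
      · rw [hpb]; module
      · rw [hpa]; module
    · exact ⟨a, b, c / 2, haF, hbF, hmid, hab, by linarith, hpa, hpb⟩
  choose xp xm lam h using key
  exact ⟨xp, xm, lam, h⟩
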